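/- In the symmetric group on {1,…,72}, let σ₀ = (3,4)(2,7)(5,9)(60,61)(63,55)(57,58)(20,22)(21,27)(24,25)(11,13)(12,18)(15,16)(39,45)(43,42)(38,40)(30,31)(29,35)(32,34)(66,72)(65,68)(67,70)(48,49)(47,53)(50,52)(1,59)(62,64)(69,54)(51,6)(41,46)(8,10)(56,23)(36,71)(33,37)(17,44)(14,19)(26,28) and let σ₁ be the product of the twenty-four 3-cycles (3i+1, 3i+2, 3i+3) for i = 0,…,23. Then σ₀ is a fixed-point-free involution, σ₁³ = 1, and the subgroup generated by σ₀ and σ₁ acts transitively on {1,…,72}. -/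

import Mathlib

set_option maxRecDepth 8000
set_option maxHeartbeats 1000000

def tc_f0 : ℕ → ℕ := fun n => if n = 1 then 59 else if n = 2 then 7 else if n = 3 then 4 else if n = 4 then 3 else if n = 5 then 9 else if n = 6 then 51 else if n = 7 then 2 else if n = 8 then 10 else if n = 9 then 5 else if n = 10 then 8 else if n = 11 then 13 else if n = 12 then 18 else if n = 13 then 11 else if n = 14 then 19 else if n = 15 then 16 else if n = 16 then 15 else if n = 17 then 44 else if n = 18 then 12 else if n = 19 then 14 else if n = 20 then 22 else if n = 21 then 27 else if n = 22 then 20 else if n = 23 then 56 else if n = 24 then 25 else if n = 25 then 24 else if n = 26 then 28 else if n = 27 then 21 else if n = 28 then 26 else if n = 29 then 35 else if n = 30 then 31 else if n = 31 then 30 else if n = 32 then 34 else if n = 33 then 37 else if n = 34 then 32 else if n = 35 then 29 else if n = 36 then 71 else if n = 37 then 33 else if n = 38 then 40 else if n = 39 then 45 else if n = 40 then 38 else if n = 41 then 46 else if n = 42 then 43 else if n = 43 then 42 else if n = 44 then 17 else if n = 45 then 39 else if n = 46 then 41 else if n = 47 then 53 else if n = 48 then 49 else if n = 49 then 48 else if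 n = 50 then 52 else if n = 51 then 6 else if n = 52 then 50 else if n = 53 then 47 else if n = 54 then 69 else if n = 55 then 63 else if n = 56 then 23 else if n = 57 then 58 else if n = 58 then 57 else if n = 59 then 1 else if n = 60 then 61 else if n = 61 then 60 else if n = 62 then 64 else if n = 63 then 55 else if n = 64 then 62 else if n = 65 then 68 else if n = 66 then 72 else if n = 67 then 70 else if n = 68 then 65 else if n = 69 then 54 else if n = 70 then 67 else if n = 71 then 36 else if n = 72 then 66 else n
def tc_f1 : ℕ → ℕ := fun n => if n = 1 then 2 else if n = 2 then 3 else if n = 3 then 1 else if n = 4 then 5 else if n = 5 then 6 else if n = 6 then 4 else if n = 7 then 8 else if n = 8 then 9 else if n = 9 then 7 else if n = 10 then 11 else if n = 11 then 12 else if n = 12 then 10 else if n = 13 then 14 else if n = 14 then 15 else if n = 15 then 13 else if n = 16 then 17 else if n = 17 then 18 else if n = 18 then 16 else if n = 19 then 20 else if n = 20 then 21 else if n = 21 then 19 else if n = 22 then 23 else if n = 23 then 24 else if n = 24 then 22 else if n = 25 then 26 else if n = 26 then 27 else if n = 27 then 25 else if n = 28 then 29 else if n = 29 then 30 else if n = 30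 then 28 else if n = 31 then 32 else if n = 32 then 33 else if n = 33 then 31 else if n = 34 then 35 else if n = 35 then 36 else if n = 36 then 34 else if n = 37 then 38 else if n = 38 then 39 else if n = 39 then 37 else if n = 40 then 41 else if n = 41 then 42 else if n = 42 then 40 else if n = 43 then 44 else if n = 44 then 45 else if n = 45 then 43 else if n = 46 then 47 else if n = 47 then 48 else if n = 48 then 46 else if n = 49 then 50 else if n = 50 then 51 else if n = 51 then 49 else if n = 52 then 53 else if n = 53 then 54 else if n = 54 then 52 else if n = 55 then 56 else if n = 56 then 57 else if n = 57 then 55 else if n = 58 then 59 else if n = 59 then 60 else if n = 60 then 58 else if n = 61 then 62 else if n = 62 then 63 else if n = 63 then 61 else if n = 64 then 65 else if n = 65 then 66 else if n = 66 then 64 else if n = 67 then 68 else if n = 68 then 69 else if n = 69 then 67 else if n = 70 then 71 else if n = 71 then 72 else if n = 72 then 70 else n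

lemma tc_L0 : ∀ m ∈ Finset.Icc 0 72, (Equiv.swap 3 4 *
      Equiv.swap 2 7 *
      Equiv.swap 5 9 *
      Equiv.swap 60 61 *
      Equiv.swap 63 55 *
      Equiv.swap 57 58 *
      Equiv.swap 20 22 *
      Equiv.swap 21 27 *
      Equiv.swap 24 25 *
      Equiv.swap 11 13 *
      Equiv.swap 12 18 *
      Equiv.swap 15 16 *
      Equiv.swap 39 45 *
      Equiv.swap 43 42 *
      Equiv.swap 38 40 *
      Equiv.swap 30 31 *
      Equiv.swap 29 35 *
      Equiv.swap 32 34 *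
      Equiv.swap 66 72 *
      Equiv.swap 65 68 *
      Equiv.swap 67 70 *
      Equiv.swap 48 49 *
      Equiv.swap 47 53 *
      Equiv.swap 50 52 *
      Equiv.swap 1 59 *
      Equiv.swap 62 64 *
      Equiv.swap 69 54 *
      Equiv.swap 51 6 *
      Equiv.swap 41 46 *
      Equiv.swap 8 10 *
      Equiv.swap 56 23 *
      Equiv.swap 36 71 *
      Equiv.swap 33 37 *
      Equiv.swap 17 44 *
      Equiv.swap 14 19 *
      Equiv.swap 26 28 : Equiv.Perm ℕ) m = tc_f0 m := by decide

lemma tc_L1 : ∀ m ∈ Finset.Icc 0 72, (([1, 2, 3] : List ℕ).formPerm *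
      ([4, 5, 6] : List ℕ).formPerm *
      ([7, 8, 9] : List ℕ).formPerm *
      ([10, 11, 12] : List ℕ).formPerm *
      ([13, 14, 15] : List ℕ).formPerm *
      ([16, 17, 18] : List ℕ).formPerm *
      ([19, 20, 21] : List ℕ).formPerm *
      ([22, 23, 24] : List ℕ).formPerm *
      ([25, 26, 27] : List ℕ).formPerm *
      ([28, 29, 30] : List ℕ).formPerm *
      ([31, 32, 33] : List ℕ).formPerm *
      ([34, 35, 36] : List ℕ).formPerm *
      ([37, 38, 39] : List ℕ).formPerm *
      ([40, 41, 42] : List ℕ).formPerm *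
      ([43, 44, 45] : List ℕ).formPerm *
      ([46, 47, 48] : List ℕ).formPerm *
      ([49, 50, 51] : List ℕ).formPerm *
      ([52, 53, 54] : List ℕ).formPerm *
      ([55, 56, 57] : List ℕ).formPerm *
      ([58, 59, 60] : List ℕ).formPerm *
      ([61, 62, 63] : List ℕ).formPerm *
      ([64, 65, 66] : List ℕ).formPerm *
      ([67, 68, 69] : List ℕ).formPerm *
      ([70, 71, 72] : List ℕ).formPerm : Equiv.Perm ℕ) m = tc_f1 m := by decide

/-- Permutation representation for the truncated cube (modular group, 72 darts): σ₀ is a fixed-point-free involution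
on {1,…,72}, σ₁^3 = 1, and the subgroup generated by σ₀ and σ₁ acts transitively on
{1,…,72}. -/
theorem truncated_cube_permutation_representation (σ₀ σ₁ : Equiv.Perm ℕ)
    (hσ₀ : σ₀ = Equiv.swap 3 4 *
      Equiv.swap 2 7 *
      Equiv.swap 5 9 *
      Equiv.swap 60 61 *
      Equiv.swap 63 55 *
      Equiv.swap 57 58 *
      Equiv.swap 20 22 *
      Equiv.swap 21 27 *
      Equiv.swap 24 25 *
      Equiv.swap 11 13 *
      Equiv.swap 12 18 *
      Equiv.swap 15 16 *
      Equiv.swap 39 45 *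
      Equiv.swap 43 42 *
      Equiv.swap 38 40 *
      Equiv.swap 30 31 *
      Equiv.swap 29 35 *
      Equiv.swap 32 34 *
      Equiv.swap 66 72 *
      Equiv.swap 65 68 *
      Equiv.swap 67 70 *
      Equiv.swap 48 49 *
      Equiv.swap 47 53 *
      Equiv.swap 50 52 *
      Equiv.swap 1 59 *
      Equiv.swap 62 64 *
      Equiv.swap 69 54 *
      Equiv.swap 51 6 *
      Equiv.swap 41 46 *
      Equiv.swap 8 10 *
      Equiv.swap 56 23 *
      Equiv.swap 36 71 *
      Equiv.swap 33 37 *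
      Equiv.swap 17 44 *
      Equiv.swap 14 19 *
      Equiv.swap 26 28)
    (hσ₁ : σ₁ = ([1, 2, 3] : List ℕ).formPerm *
      ([4, 5, 6] : List ℕ).formPerm *
      ([7, 8, 9] : List ℕ).formPerm *
      ([10, 11, 12] : List ℕ).formPerm *
      ([13, 14, 15] : List ℕ).formPerm *
      ([16, 17, 18] : List ℕ).formPerm *
      ([19, 20, 21] : List ℕ).formPerm *
      ([22, 23, 24] : List ℕ).formPerm *
      ([25, 26, 27] : List ℕ).formPerm *
      ([28, 29, 30] : List ℕ).formPerm *
      ([31, 32, 33] : List ℕ).formPerm *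
      ([34, 35, 36] : List ℕ).formPerm *
      ([37, 38, 39] : List ℕ).formPerm *
      ([40, 41, 42] : List ℕ).formPerm *
      ([43, 44, 45] : List ℕ).formPerm *
      ([46, 47, 48] : List ℕ).formPerm *
      ([49, 50, 51] : List ℕ).formPerm *
      ([52, 53, 54] : List ℕ).formPerm *
      ([55, 56, 57] : List ℕ).formPerm *
      ([58, 59, 60] : List ℕ).formPerm *
      ([61, 62, 63] : List ℕ).formPerm *
      ([64, 65, 66] : List ℕ).formPerm *
      ([67, 68, 69] : List ℕ).formPerm *
      ([70, 71, 72] : List ℕ).formPerm) :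
    σ₀ * σ₀ = 1 ∧ (∀ x ∈ Finset.Icc 1 72, σ₀ x ≠ x) ∧ σ₁ ^ 3 = 1 ∧
    ∀ a ∈ Finset.Icc 1 72, ∀ b ∈ Finset.Icc 1 72,
      ∃ g ∈ Subgroup.closure ({σ₀, σ₁} : Set (Equiv.Perm ℕ)), g a = b := by
  have A0 : ∀ m ∈ Finset.Icc 0 72, σ₀ m = tc_f0 m := by rw [hσ₀]; exact tc_L0
  have A1 : ∀ m ∈ Finset.Icc 0 72, σ₁ m = tc_f1 m := by rw [hσ₁]; exact tc_L1
  have T0 : ∀ n, 72 < n → σ₀ n = n := by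
    rw [hσ₀]; intro n hn
    have hfix : ∀ a b : ℕ, n ≠ a → n ≠ b → Equiv.swap a b n = n := fun a b => Equiv.swap_apply_of_ne_of_ne
    simp only [Equiv.Perm.mul_apply]
    rw [hfix 26 28 (by omega) (by omega), hfix 14 19 (by omega) (by omega), hfix 17 44 (by omega) (by omega), hfix 33 37 (by omega) (by omega), hfix 36 71 (by omega) (by omega), hfix 56 23 (by omega) (by omega), hfix 8 10 (by omega) (by omega), hfix 41 46 (by omega) (by omega), hfix 51 6 (by omega) (by omega), hfix 69 54 (by omega) (by omega), hfix 62 64 (by omega) (by omega), hfix 1 59 (by omega) (by omega), hfix 50 52 (by omega) (by omega), hfix 47 53 (by omega) (by omega), hfix 48 49 (by omega) (by omega), hfix 67 70 (by omega) (by omega), hfix 65 68 (by omega) (by omega), hfix 66 72 (by omega) (by omega), hfix 32 34 (by omega) (by omega), hfix 29 35 (by omega) (by omega), hfix 30 31 (by omega) (by omega), hfix 38 40 (by omega) (by omega), hfix 43 42 (by omega) (by omega), hfix 39 45 (by omega) (by omega), hfix 15 16 (by omega) (by omega), hfix 12 18 (by omega) (by omega), hfix 11 13 (by omega) (by omega),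 hfix 24 25 (by omega) (by omega), hfix 21 27 (by omega) (by omega), hfix 20 22 (by omega) (by omega), hfix 57 58 (by omega) (by omega), hfix 63 55 (by omega) (by omega), hfix 60 61 (by omega) (by omega), hfix 5 9 (by omega) (by omega), hfix 2 7 (by omega) (by omega), hfix 3 4 (by omega) (by omega)]
  have T1 : ∀ n, 72 < n → σ₁ n = n := by
    rw [hσ₁]; intro n hn
    have hfix : ∀ l : List ℕ, n ∉ l → l.formPerm n = n := fun l h => List.formPerm_apply_of_notMem h
    simp only [Equiv.Perm.mul_apply]
    rw [hfix [70, 71, 72] (by simp; omega), hfix [67, 68, 69] (by simp; omega), hfix [64, 65, 66] (by simp; omega), hfix [61, 62, 63] (by simp; omega), hfix [58, 59, 60] (by simp; omega), hfix [55, 56, 57] (by simp; omega), hfix [52, 53, 54] (by simp; omega), hfix [49, 50, 51] (by simp; omega), hfix [46, 47, 48] (by simp; omega), hfix [43, 44, 45] (by simp; omega), hfix [40, 41, 42] (by simp; omega), hfix [37, 38, 39] (by simp; omega), hfix [34, 35, 36] (by simp; omega), hfix [31, 32, 33] (by simp; omega), hfix [28, 29, 30] (by simp; omega), hfix [25, 26,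 27] (by simp; omega), hfix [22, 23, 24] (by simp; omega), hfix [19, 20, 21] (by simp; omega), hfix [16, 17, 18] (by simp; omega), hfix [13, 14, 15] (by simp; omega), hfix [10, 11, 12] (by simp; omega), hfix [7, 8, 9] (by simp; omega), hfix [4, 5, 6] (by simp; omega), hfix [1, 2, 3] (by simp; omega)]
  have mem72 : ∀ n : ℕ, n ≤ 72 → n ∈ Finset.Icc 0 72 := fun n h => Finset.mem_Icc.mpr ⟨Nat.zero_le n, h⟩
  have C0 : ∀ m ∈ Finset.Icc 0 72, tc_f0 m ≤ 72 := by decide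
  have C1 : ∀ m ∈ Finset.Icc 0 72, tc_f1 m ≤ 72 := by decide
  refine ⟨?_, ?_, ?_, ?_⟩
  · ext n
    simp only [Equiv.Perm.mul_apply, Equiv.Perm.one_apply]
    by_cases h : n ≤ 72
    · rw [A0 n (mem72 n h), A0 _ (mem72 _ (C0 n (mem72 n h)))]
      exact (by decide : ∀ m ∈ Finset.Icc 0 72, tc_f0 (tc_f0 m) = m) n (mem72 n h)
    · rw [T0 n (by omega), T0 n (by omega)]
  · intro x hx
    have hx' := Finset.mem_Icc.mp hx
    rw [A0 x (mem72 x hx'.2)]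
    exact (by decide : ∀ x ∈ Finset.Icc 1 72, tc_f0 x ≠ x) x hx
  · ext n
    have h3 : σ₁ ^ 3 = σ₁ * σ₁ * σ₁ := by rw [pow_succ, pow_succ, pow_one]
    rw [h3]
    simp only [Equiv.Perm.mul_apply, Equiv.Perm.one_apply]
    by_cases h : n ≤ 72
    · have m1 := mem72 n h
      have m2 := mem72 _ (C1 n m1)
      have m3 := mem72 _ (C1 _ m2)
      rw [A1 n m1, A1 _ m2, A1 _ m3]
      exact (by decide : ∀ m ∈ Finset.Icc 0 72, tc_f1 (tc_f1 (tc_f1 m)) = m) n m1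
    · rw [T1 n (by omega), T1 n (by omega), T1 n (by omega)]
  · have h0 : σ₀ ∈ Subgroup.closure ({σ₀, σ₁} : Set (Equiv.Perm ℕ)) := Subgroup.subset_closure (Set.mem_insert _ _)
    have h1 : σ₁ ∈ Subgroup.closure ({σ₀, σ₁} : Set (Equiv.Perm ℕ)) := Subgroup.subset_closure (Set.mem_insert_of_mem _ rfl)
    have r1 : ∃ g ∈ Subgroup.closure ({σ₀, σ₁} : Set (Equiv.Perm ℕ)), g 1 = 1 := ⟨1, one_mem _, rfl⟩
    have r59 : ∃ g ∈ Subgroup.closure ({σ₀, σ₁} : Set (Equiv.Perm ℕ)), g 1 = 59 := by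
      obtain ⟨g, hg, h⟩ := r1
      refine ⟨σ₀ * g, mul_mem h0 hg, ?_⟩
      rw [Equiv.Perm.mul_apply, h, A0 1 (by decide)]; decide
    have r2 : ∃ g ∈ Subgroup.closure ({σ₀, σ₁} : Set (Equiv.Perm ℕ)), g 1 = 2 := by
      obtain ⟨g, hg, h⟩ := r1
      refine ⟨σ₁ * g, mul_mem h1 hg, ?_⟩
      rw [Equiv.Perm.mul_apply, h, A1 1 (by decide)]; decide
    have r60 : ∃ g ∈ Subgroup.closure ({σ₀, σ₁} : Set (Equiv.Perm ℕ)), g 1 = 60 := by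
      obtain ⟨g, hg, h⟩ := r59
      refine ⟨σ₁ * g, mul_mem h1 hg, ?_⟩
      rw [Equiv.Perm.mul_apply, h, A1 59 (by decide)]; decide
    have r7 : ∃ g ∈ Subgroup.closure ({σ₀, σ₁} : Set (Equiv.Perm ℕ)), g 1 = 7 := by
      obtain ⟨g, hg, h⟩ := r2
      refine ⟨σ₀ * g, mul_mem h0 hg, ?_⟩
      rw [Equiv.Perm.mul_apply, h, A0 2 (by decide)]; decide
    have r3 : ∃ g ∈ Subgroup.closure ({σ₀, σ₁} : Set (Equiv.Perm ℕ)), g 1 = 3 := by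
      obtain ⟨g, hg, h⟩ := r2
      refine ⟨σ₁ * g, mul_mem h1 hg, ?_⟩
      rw [Equiv.Perm.mul_apply, h, A1 2 (by decide)]; decide
    have r61 : ∃ g ∈ Subgroup.closure ({σ₀, σ₁} : Set (Equiv.Perm ℕ)), g 1 = 61 := by
      obtain ⟨g, hg, h⟩ := r60
      refine ⟨σ₀ * g, mul_mem h0 hg, ?_⟩
      rw [Equiv.Perm.mul_apply, h, A0 60 (by decide)]; decide
    have r58 : ∃ g ∈ Subgroup.closure ({σ₀, σ₁} : Set (Equiv.Perm ℕ)), g 1 = 58 := by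
      obtain ⟨g, hg, h⟩ := r60
      refine ⟨σ₁ * g, mul_mem h1 hg, ?_⟩
      rw [Equiv.Perm.mul_apply, h, A1 60 (by decide)]; decide
    have r8 : ∃ g ∈ Subgroup.closure ({σ₀, σ₁} : Set (Equiv.Perm ℕ)), g 1 = 8 := by
      obtain ⟨g, hg, h⟩ := r7
      refine ⟨σ₁ * g, mul_mem h1 hg, ?_⟩
      rw [Equiv.Perm.mul_apply, h, A1 7 (by decide)]; decide
    have r4 : ∃ g ∈ Subgroup.closure ({σ₀, σ₁} : Set (Equiv.Perm ℕ)), g 1 = 4 := by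
      obtain ⟨g, hg, h⟩ := r3
      refine ⟨σ₀ * g, mul_mem h0 hg, ?_⟩
      rw [Equiv.Perm.mul_apply, h, A0 3 (by decide)]; decide
    have r62 : ∃ g ∈ Subgroup.closure ({σ₀, σ₁} : Set (Equiv.Perm ℕ)), g 1 = 62 := by
      obtain ⟨g, hg, h⟩ := r61
      refine ⟨σ₁ * g, mul_mem h1 hg, ?_⟩
      rw [Equiv.Perm.mul_apply, h, A1 61 (by decide)]; decide
    have r57 : ∃ g ∈ Subgroup.closure ({σ₀, σ₁} : Set (Equiv.Perm ℕ)), g 1 = 57 := by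
      obtain ⟨g, hg, h⟩ := r58
      refine ⟨σ₀ * g, mul_mem h0 hg, ?_⟩
      rw [Equiv.Perm.mul_apply, h, A0 58 (by decide)]; decide
    have r10 : ∃ g ∈ Subgroup.closure ({σ₀, σ₁} : Set (Equiv.Perm ℕ)), g 1 = 10 := by
      obtain ⟨g, hg, h⟩ := r8
      refine ⟨σ₀ * g, mul_mem h0 hg, ?_⟩
      rw [Equiv.Perm.mul_apply, h, A0 8 (by decide)]; decide
    have r9 : ∃ g ∈ Subgroup.closure ({σ₀, σ₁} : Set (Equiv.Perm ℕ)), g 1 = 9 := by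
      obtain ⟨g, hg, h⟩ := r8
      refine ⟨σ₁ * g, mul_mem h1 hg, ?_⟩
      rw [Equiv.Perm.mul_apply, h, A1 8 (by decide)]; decide
    have r5 : ∃ g ∈ Subgroup.closure ({σ₀, σ₁} : Set (Equiv.Perm ℕ)), g 1 = 5 := by
      obtain ⟨g, hg, h⟩ := r4
      refine ⟨σ₁ * g, mul_mem h1 hg, ?_⟩
      rw [Equiv.Perm.mul_apply, h, A1 4 (by decide)]; decide
    have r64 : ∃ g ∈ Subgroup.closure ({σ₀, σ₁} : Set (Equiv.Perm ℕ)), g 1 = 64 := by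
      obtain ⟨g, hg, h⟩ := r62
      refine ⟨σ₀ * g, mul_mem h0 hg, ?_⟩
      rw [Equiv.Perm.mul_apply, h, A0 62 (by decide)]; decide
    have r63 : ∃ g ∈ Subgroup.closure ({σ₀, σ₁} : Set (Equiv.Perm ℕ)), g 1 = 63 := by
      obtain ⟨g, hg, h⟩ := r62
      refine ⟨σ₁ * g, mul_mem h1 hg, ?_⟩
      rw [Equiv.Perm.mul_apply, h, A1 62 (by decide)]; decide
    have r55 : ∃ g ∈ Subgroup.closure ({σ₀, σ₁} : Set (Equiv.Perm ℕ)), g 1 = 55 := by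
      obtain ⟨g, hg, h⟩ := r57
      refine ⟨σ₁ * g, mul_mem h1 hg, ?_⟩
      rw [Equiv.Perm.mul_apply, h, A1 57 (by decide)]; decide
    have r11 : ∃ g ∈ Subgroup.closure ({σ₀, σ₁} : Set (Equiv.Perm ℕ)), g 1 = 11 := by
      obtain ⟨g, hg, h⟩ := r10
      refine ⟨σ₁ * g, mul_mem h1 hg, ?_⟩
      rw [Equiv.Perm.mul_apply, h, A1 10 (by decide)]; decide
    have r6 : ∃ g ∈ Subgroup.closure ({σ₀, σ₁} : Set (Equiv.Perm ℕ)), g 1 = 6 := by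
      obtain ⟨g, hg, h⟩ := r5
      refine ⟨σ₁ * g, mul_mem h1 hg, ?_⟩
      rw [Equiv.Perm.mul_apply, h, A1 5 (by decide)]; decide
    have r65 : ∃ g ∈ Subgroup.closure ({σ₀, σ₁} : Set (Equiv.Perm ℕ)), g 1 = 65 := by
      obtain ⟨g, hg, h⟩ := r64
      refine ⟨σ₁ * g, mul_mem h1 hg, ?_⟩
      rw [Equiv.Perm.mul_apply, h, A1 64 (by decide)]; decide
    have r56 : ∃ g ∈ Subgroup.closure ({σ₀, σ₁} : Set (Equiv.Perm ℕ)), g 1 = 56 := by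
      obtain ⟨g, hg, h⟩ := r55
      refine ⟨σ₁ * g, mul_mem h1 hg, ?_⟩
      rw [Equiv.Perm.mul_apply, h, A1 55 (by decide)]; decide
    have r13 : ∃ g ∈ Subgroup.closure ({σ₀, σ₁} : Set (Equiv.Perm ℕ)), g 1 = 13 := by
      obtain ⟨g, hg, h⟩ := r11
      refine ⟨σ₀ * g, mul_mem h0 hg, ?_⟩
      rw [Equiv.Perm.mul_apply, h, A0 11 (by decide)]; decide
    have r12 : ∃ g ∈ Subgroup.closure ({σ₀, σ₁} : Set (Equiv.Perm ℕ)), g 1 = 12 := by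
      obtain ⟨g, hg, h⟩ := r11
      refine ⟨σ₁ * g, mul_mem h1 hg, ?_⟩
      rw [Equiv.Perm.mul_apply, h, A1 11 (by decide)]; decide
    have r51 : ∃ g ∈ Subgroup.closure ({σ₀, σ₁} : Set (Equiv.Perm ℕ)), g 1 = 51 := by
      obtain ⟨g, hg, h⟩ := r6
      refine ⟨σ₀ * g, mul_mem h0 hg, ?_⟩
      rw [Equiv.Perm.mul_apply, h, A0 6 (by decide)]; decide
    have r68 : ∃ g ∈ Subgroup.closure ({σ₀, σ₁} : Set (Equiv.Perm ℕ)), g 1 = 68 := by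
      obtain ⟨g, hg, h⟩ := r65
      refine ⟨σ₀ * g, mul_mem h0 hg, ?_⟩
      rw [Equiv.Perm.mul_apply, h, A0 65 (by decide)]; decide
    have r66 : ∃ g ∈ Subgroup.closure ({σ₀, σ₁} : Set (Equiv.Perm ℕ)), g 1 = 66 := by
      obtain ⟨g, hg, h⟩ := r65
      refine ⟨σ₁ * g, mul_mem h1 hg, ?_⟩
      rw [Equiv.Perm.mul_apply, h, A1 65 (by decide)]; decide
    have r23 : ∃ g ∈ Subgroup.closure ({σ₀, σ₁} : Set (Equiv.Perm ℕ)), g 1 = 23 := by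
      obtain ⟨g, hg, h⟩ := r56
      refine ⟨σ₀ * g, mul_mem h0 hg, ?_⟩
      rw [Equiv.Perm.mul_apply, h, A0 56 (by decide)]; decide
    have r14 : ∃ g ∈ Subgroup.closure ({σ₀, σ₁} : Set (Equiv.Perm ℕ)), g 1 = 14 := by
      obtain ⟨g, hg, h⟩ := r13
      refine ⟨σ₁ * g, mul_mem h1 hg, ?_⟩
      rw [Equiv.Perm.mul_apply, h, A1 13 (by decide)]; decide
    have r18 : ∃ g ∈ Subgroup.closure ({σ₀, σ₁} : Set (Equiv.Perm ℕ)), g 1 = 18 := by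
      obtain ⟨g, hg, h⟩ := r12
      refine ⟨σ₀ * g, mul_mem h0 hg, ?_⟩
      rw [Equiv.Perm.mul_apply, h, A0 12 (by decide)]; decide
    have r49 : ∃ g ∈ Subgroup.closure ({σ₀, σ₁} : Set (Equiv.Perm ℕ)), g 1 = 49 := by
      obtain ⟨g, hg, h⟩ := r51
      refine ⟨σ₁ * g, mul_mem h1 hg, ?_⟩
      rw [Equiv.Perm.mul_apply, h, A1 51 (by decide)]; decide
    have r69 : ∃ g ∈ Subgroup.closure ({σ₀, σ₁} : Set (Equiv.Perm ℕ)), g 1 = 69 := by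
      obtain ⟨g, hg, h⟩ := r68
      refine ⟨σ₁ * g, mul_mem h1 hg, ?_⟩
      rw [Equiv.Perm.mul_apply, h, A1 68 (by decide)]; decide
    have r72 : ∃ g ∈ Subgroup.closure ({σ₀, σ₁} : Set (Equiv.Perm ℕ)), g 1 = 72 := by
      obtain ⟨g, hg, h⟩ := r66
      refine ⟨σ₀ * g, mul_mem h0 hg, ?_⟩
      rw [Equiv.Perm.mul_apply, h, A0 66 (by decide)]; decide
    have r24 : ∃ g ∈ Subgroup.closure ({σ₀, σ₁} : Set (Equiv.Perm ℕ)), g 1 = 24 := by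
      obtain ⟨g, hg, h⟩ := r23
      refine ⟨σ₁ * g, mul_mem h1 hg, ?_⟩
      rw [Equiv.Perm.mul_apply, h, A1 23 (by decide)]; decide
    have r19 : ∃ g ∈ Subgroup.closure ({σ₀, σ₁} : Set (Equiv.Perm ℕ)), g 1 = 19 := by
      obtain ⟨g, hg, h⟩ := r14
      refine ⟨σ₀ * g, mul_mem h0 hg, ?_⟩
      rw [Equiv.Perm.mul_apply, h, A0 14 (by decide)]; decide
    have r15 : ∃ g ∈ Subgroup.closure ({σ₀, σ₁} : Set (Equiv.Perm ℕ)), g 1 = 15 := by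
      obtain ⟨g, hg, h⟩ := r14
      refine ⟨σ₁ * g, mul_mem h1 hg, ?_⟩
      rw [Equiv.Perm.mul_apply, h, A1 14 (by decide)]; decide
    have r16 : ∃ g ∈ Subgroup.closure ({σ₀, σ₁} : Set (Equiv.Perm ℕ)), g 1 = 16 := by
      obtain ⟨g, hg, h⟩ := r18
      refine ⟨σ₁ * g, mul_mem h1 hg, ?_⟩
      rw [Equiv.Perm.mul_apply, h, A1 18 (by decide)]; decide
    have r48 : ∃ g ∈ Subgroup.closure ({σ₀, σ₁} : Set (Equiv.Perm ℕ)), g 1 = 48 := by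
      obtain ⟨g, hg, h⟩ := r49
      refine ⟨σ₀ * g, mul_mem h0 hg, ?_⟩
      rw [Equiv.Perm.mul_apply, h, A0 49 (by decide)]; decide
    have r50 : ∃ g ∈ Subgroup.closure ({σ₀, σ₁} : Set (Equiv.Perm ℕ)), g 1 = 50 := by
      obtain ⟨g, hg, h⟩ := r49
      refine ⟨σ₁ * g, mul_mem h1 hg, ?_⟩
      rw [Equiv.Perm.mul_apply, h, A1 49 (by decide)]; decide
    have r54 : ∃ g ∈ Subgroup.closure ({σ₀, σ₁} : Set (Equiv.Perm ℕ)), g 1 = 54 := by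
      obtain ⟨g, hg, h⟩ := r69
      refine ⟨σ₀ * g, mul_mem h0 hg, ?_⟩
      rw [Equiv.Perm.mul_apply, h, A0 69 (by decide)]; decide
    have r67 : ∃ g ∈ Subgroup.closure ({σ₀, σ₁} : Set (Equiv.Perm ℕ)), g 1 = 67 := by
      obtain ⟨g, hg, h⟩ := r69
      refine ⟨σ₁ * g, mul_mem h1 hg, ?_⟩
      rw [Equiv.Perm.mul_apply, h, A1 69 (by decide)]; decide
    have r70 : ∃ g ∈ Subgroup.closure ({σ₀, σ₁} : Set (Equiv.Perm ℕ)), g 1 = 70 := by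
      obtain ⟨g, hg, h⟩ := r72
      refine ⟨σ₁ * g, mul_mem h1 hg, ?_⟩
      rw [Equiv.Perm.mul_apply, h, A1 72 (by decide)]; decide
    have r25 : ∃ g ∈ Subgroup.closure ({σ₀, σ₁} : Set (Equiv.Perm ℕ)), g 1 = 25 := by
      obtain ⟨g, hg, h⟩ := r24
      refine ⟨σ₀ * g, mul_mem h0 hg, ?_⟩
      rw [Equiv.Perm.mul_apply, h, A0 24 (by decide)]; decide
    have r22 : ∃ g ∈ Subgroup.closure ({σ₀, σ₁} : Set (Equiv.Perm ℕ)), g 1 = 22 := by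
      obtain ⟨g, hg, h⟩ := r24
      refine ⟨σ₁ * g, mul_mem h1 hg, ?_⟩
      rw [Equiv.Perm.mul_apply, h, A1 24 (by decide)]; decide
    have r20 : ∃ g ∈ Subgroup.closure ({σ₀, σ₁} : Set (Equiv.Perm ℕ)), g 1 = 20 := by
      obtain ⟨g, hg, h⟩ := r19
      refine ⟨σ₁ * g, mul_mem h1 hg, ?_⟩
      rw [Equiv.Perm.mul_apply, h, A1 19 (by decide)]; decide
    have r17 : ∃ g ∈ Subgroup.closure ({σ₀, σ₁} : Set (Equiv.Perm ℕ)), g 1 = 17 := by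
      obtain ⟨g, hg, h⟩ := r16
      refine ⟨σ₁ * g, mul_mem h1 hg, ?_⟩
      rw [Equiv.Perm.mul_apply, h, A1 16 (by decide)]; decide
    have r46 : ∃ g ∈ Subgroup.closure ({σ₀, σ₁} : Set (Equiv.Perm ℕ)), g 1 = 46 := by
      obtain ⟨g, hg, h⟩ := r48
      refine ⟨σ₁ * g, mul_mem h1 hg, ?_⟩
      rw [Equiv.Perm.mul_apply, h, A1 48 (by decide)]; decide
    have r52 : ∃ g ∈ Subgroup.closure ({σ₀, σ₁} : Set (Equiv.Perm ℕ)), g 1 = 52 := by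
      obtain ⟨g, hg, h⟩ := r50
      refine ⟨σ₀ * g, mul_mem h0 hg, ?_⟩
      rw [Equiv.Perm.mul_apply, h, A0 50 (by decide)]; decide
    have r71 : ∃ g ∈ Subgroup.closure ({σ₀, σ₁} : Set (Equiv.Perm ℕ)), g 1 = 71 := by
      obtain ⟨g, hg, h⟩ := r70
      refine ⟨σ₁ * g, mul_mem h1 hg, ?_⟩
      rw [Equiv.Perm.mul_apply, h, A1 70 (by decide)]; decide
    have r26 : ∃ g ∈ Subgroup.closure ({σ₀, σ₁} : Set (Equiv.Perm ℕ)), g 1 = 26 := by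
      obtain ⟨g, hg, h⟩ := r25
      refine ⟨σ₁ * g, mul_mem h1 hg, ?_⟩
      rw [Equiv.Perm.mul_apply, h, A1 25 (by decide)]; decide
    have r21 : ∃ g ∈ Subgroup.closure ({σ₀, σ₁} : Set (Equiv.Perm ℕ)), g 1 = 21 := by
      obtain ⟨g, hg, h⟩ := r20
      refine ⟨σ₁ * g, mul_mem h1 hg, ?_⟩
      rw [Equiv.Perm.mul_apply, h, A1 20 (by decide)]; decide
    have r44 : ∃ g ∈ Subgroup.closure ({σ₀, σ₁} : Set (Equiv.Perm ℕ)), g 1 = 44 := by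
      obtain ⟨g, hg, h⟩ := r17
      refine ⟨σ₀ * g, mul_mem h0 hg, ?_⟩
      rw [Equiv.Perm.mul_apply, h, A0 17 (by decide)]; decide
    have r41 : ∃ g ∈ Subgroup.closure ({σ₀, σ₁} : Set (Equiv.Perm ℕ)), g 1 = 41 := by
      obtain ⟨g, hg, h⟩ := r46
      refine ⟨σ₀ * g, mul_mem h0 hg, ?_⟩
      rw [Equiv.Perm.mul_apply, h, A0 46 (by decide)]; decide
    have r47 : ∃ g ∈ Subgroup.closure ({σ₀, σ₁} : Set (Equiv.Perm ℕ)), g 1 = 47 := by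
      obtain ⟨g, hg, h⟩ := r46
      refine ⟨σ₁ * g, mul_mem h1 hg, ?_⟩
      rw [Equiv.Perm.mul_apply, h, A1 46 (by decide)]; decide
    have r53 : ∃ g ∈ Subgroup.closure ({σ₀, σ₁} : Set (Equiv.Perm ℕ)), g 1 = 53 := by
      obtain ⟨g, hg, h⟩ := r52
      refine ⟨σ₁ * g, mul_mem h1 hg, ?_⟩
      rw [Equiv.Perm.mul_apply, h, A1 52 (by decide)]; decide
    have r36 : ∃ g ∈ Subgroup.closure ({σ₀, σ₁} : Set (Equiv.Perm ℕ)), g 1 = 36 := by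
      obtain ⟨g, hg, h⟩ := r71
      refine ⟨σ₀ * g, mul_mem h0 hg, ?_⟩
      rw [Equiv.Perm.mul_apply, h, A0 71 (by decide)]; decide
    have r28 : ∃ g ∈ Subgroup.closure ({σ₀, σ₁} : Set (Equiv.Perm ℕ)), g 1 = 28 := by
      obtain ⟨g, hg, h⟩ := r26
      refine ⟨σ₀ * g, mul_mem h0 hg, ?_⟩
      rw [Equiv.Perm.mul_apply, h, A0 26 (by decide)]; decide
    have r27 : ∃ g ∈ Subgroup.closure ({σ₀, σ₁} : Set (Equiv.Perm ℕ)), g 1 = 27 := by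
      obtain ⟨g, hg, h⟩ := r26
      refine ⟨σ₁ * g, mul_mem h1 hg, ?_⟩
      rw [Equiv.Perm.mul_apply, h, A1 26 (by decide)]; decide
    have r45 : ∃ g ∈ Subgroup.closure ({σ₀, σ₁} : Set (Equiv.Perm ℕ)), g 1 = 45 := by
      obtain ⟨g, hg, h⟩ := r44
      refine ⟨σ₁ * g, mul_mem h1 hg, ?_⟩
      rw [Equiv.Perm.mul_apply, h, A1 44 (by decide)]; decide
    have r42 : ∃ g ∈ Subgroup.closure ({σ₀, σ₁} : Set (Equiv.Perm ℕ)), g 1 = 42 := by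
      obtain ⟨g, hg, h⟩ := r41
      refine ⟨σ₁ * g, mul_mem h1 hg, ?_⟩
      rw [Equiv.Perm.mul_apply, h, A1 41 (by decide)]; decide
    have r34 : ∃ g ∈ Subgroup.closure ({σ₀, σ₁} : Set (Equiv.Perm ℕ)), g 1 = 34 := by
      obtain ⟨g, hg, h⟩ := r36
      refine ⟨σ₁ * g, mul_mem h1 hg, ?_⟩
      rw [Equiv.Perm.mul_apply, h, A1 36 (by decide)]; decide
    have r29 : ∃ g ∈ Subgroup.closure ({σ₀, σ₁} : Set (Equiv.Perm ℕ)), g 1 = 29 := by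
      obtain ⟨g, hg, h⟩ := r28
      refine ⟨σ₁ * g, mul_mem h1 hg, ?_⟩
      rw [Equiv.Perm.mul_apply, h, A1 28 (by decide)]; decide
    have r39 : ∃ g ∈ Subgroup.closure ({σ₀, σ₁} : Set (Equiv.Perm ℕ)), g 1 = 39 := by
      obtain ⟨g, hg, h⟩ := r45
      refine ⟨σ₀ * g, mul_mem h0 hg, ?_⟩
      rw [Equiv.Perm.mul_apply, h, A0 45 (by decide)]; decide
    have r43 : ∃ g ∈ Subgroup.closure ({σ₀, σ₁} : Set (Equiv.Perm ℕ)), g 1 = 43 := by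
      obtain ⟨g, hg, h⟩ := r45
      refine ⟨σ₁ * g, mul_mem h1 hg, ?_⟩
      rw [Equiv.Perm.mul_apply, h, A1 45 (by decide)]; decide
    have r40 : ∃ g ∈ Subgroup.closure ({σ₀, σ₁} : Set (Equiv.Perm ℕ)), g 1 = 40 := by
      obtain ⟨g, hg, h⟩ := r42
      refine ⟨σ₁ * g, mul_mem h1 hg, ?_⟩
      rw [Equiv.Perm.mul_apply, h, A1 42 (by decide)]; decide
    have r32 : ∃ g ∈ Subgroup.closure ({σ₀, σ₁} : Set (Equiv.Perm ℕ)), g 1 = 32 := by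
      obtain ⟨g, hg, h⟩ := r34
      refine ⟨σ₀ * g, mul_mem h0 hg, ?_⟩
      rw [Equiv.Perm.mul_apply, h, A0 34 (by decide)]; decide
    have r35 : ∃ g ∈ Subgroup.closure ({σ₀, σ₁} : Set (Equiv.Perm ℕ)), g 1 = 35 := by
      obtain ⟨g, hg, h⟩ := r34
      refine ⟨σ₁ * g, mul_mem h1 hg, ?_⟩
      rw [Equiv.Perm.mul_apply, h, A1 34 (by decide)]; decide
    have r30 : ∃ g ∈ Subgroup.closure ({σ₀, σ₁} : Set (Equiv.Perm ℕ)), g 1 = 30 := by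
      obtain ⟨g, hg, h⟩ := r29
      refine ⟨σ₁ * g, mul_mem h1 hg, ?_⟩
      rw [Equiv.Perm.mul_apply, h, A1 29 (by decide)]; decide
    have r37 : ∃ g ∈ Subgroup.closure ({σ₀, σ₁} : Set (Equiv.Perm ℕ)), g 1 = 37 := by
      obtain ⟨g, hg, h⟩ := r39
      refine ⟨σ₁ * g, mul_mem h1 hg, ?_⟩
      rw [Equiv.Perm.mul_apply, h, A1 39 (by decide)]; decide
    have r38 : ∃ g ∈ Subgroup.closure ({σ₀, σ₁} : Set (Equiv.Perm ℕ)), g 1 = 38 := by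
      obtain ⟨g, hg, h⟩ := r40
      refine ⟨σ₀ * g, mul_mem h0 hg, ?_⟩
      rw [Equiv.Perm.mul_apply, h, A0 40 (by decide)]; decide
    have r33 : ∃ g ∈ Subgroup.closure ({σ₀, σ₁} : Set (Equiv.Perm ℕ)), g 1 = 33 := by
      obtain ⟨g, hg, h⟩ := r32
      refine ⟨σ₁ * g, mul_mem h1 hg, ?_⟩
      rw [Equiv.Perm.mul_apply, h, A1 32 (by decide)]; decide
    have r31 : ∃ g ∈ Subgroup.closure ({σ₀, σ₁} : Set (Equiv.Perm ℕ)), g 1 = 31 := by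
      obtain ⟨g, hg, h⟩ := r30
      refine ⟨σ₀ * g, mul_mem h0 hg, ?_⟩
      rw [Equiv.Perm.mul_apply, h, A0 30 (by decide)]; decide
    have R : ∀ b ∈ Finset.Icc 1 72, ∃ g ∈ Subgroup.closure ({σ₀, σ₁} : Set (Equiv.Perm ℕ)), g 1 = b := by
      intro b hb
      rw [Finset.mem_Icc] at hb
      obtain ⟨hb1, hb2⟩ := hb
      interval_cases b
      exacts [r1, r2, r3, r4, r5, r6, r7, r8, r9, r10, r11, r12, r13, r14, r15, r16, r17, r18, r19, r20, r21, r22, r23, r24, r25, r26, r27, r28, r29, r30, r31, r32, r33, r34, r35, r36, r37, r38, r39, r40, r41, r42, r43, r44, r45, r46, r47, r48, r49, r50, r51, r52, r53, r54, r55, r56, r57, r58, r59, r60, r61, r62, r63, r64, r65, r66, r67, r68, r69, r70, r71, r72]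
    intro a ha b hb
    obtain ⟨ga, hga, hga1⟩ := R a ha
    obtain ⟨gb, hgb, hgb1⟩ := R b hb
    have hinv : ga⁻¹ a = 1 := by rw [← hga1, Equiv.Perm.inv_def, Equiv.symm_apply_apply]
    exact ⟨gb * ga⁻¹, mul_mem hgb (inv_mem hga), by rw [Equiv.Perm.mul_apply, hinv, hgb1]⟩
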